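/- arXiv:1611.04014 — 2 statements merged into one kernel-verified Lean document; each statement's English description precedes it below -/
import Mathlib

section
/- If v = m(u, E₁) is the minimal cluster of a word u with embedding set E₁, and w = m(v, E₂) is the minimal cluster of v with embedding set E₂, then w is the minimal cluster of u with embedding set E₃ = { i + j − 1 : i ∈ E₁, j ∈ E₂ }. -/
abbrev Word := List ℕ+

/-- Height (letter-sum) of a word. -/
def ht (w : Word) : ℕ := (w.map (fun x => (x : ℕ))).sum

/-- Embedding index set of `u` into `w` (1-based positions). -/
def Em (u w : Word) : Set ℕ :=
  {j | 1 ≤ j ∧ j - 1 + u.length ≤ w.length ∧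
    ∀ k, k < u.length → u.getD k 1 ≤ w.getD (j - 1 + k) 1}

/-- Super-strong Wilf equivalence. -/
def SSWilf (u v : Word) : Prop :=
  ∃ f : Word → Word, Function.Bijective f ∧
    (∀ w, (f w).length = w.length ∧ ht (f w) = ht w) ∧
    (∀ w, Em u w = Em v (f w))

/-- `w` is a permutation of `[n]`. -/
def IsPerm (n : ℕ) (w : Word) : Prop :=
  w.length = n ∧ ∀ k : ℕ, 1 ≤ k → k ≤ n → (w.map (fun x => (x : ℕ))).count k = 1

/-- 1-based position of the letter `k` in `u`. -/
def pos (u : Word) (k : ℕ) : ℕ := (u.map (fun x => (x : ℕ))).idxOf k + 1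

/-- `E` is an embedding set satisfying the overlap condition for words of length `n`. -/
def IsEmbSet (n : ℕ) (E : Finset ℕ) : Prop :=
  1 ∈ E ∧ (∀ a ∈ E, 1 ≤ a) ∧
  ∀ a ∈ E, (∀ b ∈ E, b ≤ a) ∨ ∃ b ∈ E, a < b ∧ b ≤ a + (n - 1)

/-- The letter at (1-based) position `p` of the (pre-)cluster of `u` on `E`. -/
def clusterAt (u : Word) (E : Finset ℕ) (p : ℕ) : ℕ+ :=
  (E.sup (fun a => if a ≤ p ∧ p < a + u.length then ((u.getD (p - a) 1 : ℕ+) : ℕ) else 1)).toPNat'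

/-- The minimal cluster of `u` with embedding set `E`. -/
def mcluster (u : Word) (E : Finset ℕ) : Word :=
  (List.range (E.sup id - 1 + u.length)).map (fun j => clusterAt u E (j + 1))

/-- The extended minimal cluster of `u` on `E` with prescribed length `n`. -/
def extCluster (u : Word) (E : Finset ℕ) (n : ℕ) : Word :=
  (List.range n).map (fun j => clusterAt u E (j + 1))

/-- The multiset `i⁺(u)` of distances from the letter `i` to larger letters. -/
def iplus (n : ℕ) (u : Word) (i : ℕ) : Multiset ℕ :=
  (Multiset.Icc (i + 1) n).map (fun j => Nat.dist (pos u i) (pos u j))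

/-- Cross equivalence of permutations of `[n]`. -/
def CrossEq (n : ℕ) (u v : Word) : Prop :=
  ∀ i, 1 ≤ i → i ≤ n - 1 → iplus n u i = iplus n v i

/-- Increasing list of (1-based) positions in `u` of the letters `≥ i`. -/
def posList (u : Word) (i : ℕ) : List ℕ :=
  ((List.range u.length).filter (fun k => i ≤ ((u.getD k 1 : ℕ+) : ℕ))).map (· + 1)

/-- `Δᵢ(u⁻¹)`: consecutive differences of positions of letters `≥ i` in `u`. -/
def Delta (u : Word) (i : ℕ) : List ℕ :=
  List.zipWith (fun a b => b - a) (posList u i) (posList u i).tail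

/-- Shift `(p-1) + E` of an embedding set. -/
def shiftSet (p : ℕ) (E : Finset ℕ) : Finset ℕ := E.image (fun e => p - 1 + e)

lemma mcluster_length (u : Word) (E : Finset ℕ) :
    (mcluster u E).length = E.sup id - 1 + u.length := by
  simp [mcluster]

lemma mcluster_getD (u : Word) (E : Finset ℕ) (k : ℕ)
    (hk : k < E.sup id - 1 + u.length) :
    (mcluster u E).getD k 1 = clusterAt u E (k + 1) := by
  simp [mcluster, List.getD_eq_getElem?_getD, List.getElem?_map, List.getElem?_range, hk]

lemma clusterAt_coe (u : Word) (E : Finset ℕ) (p : ℕ) (hE : 1 ∈ E) :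
    ((clusterAt u E p : ℕ+) : ℕ) =
      E.sup (fun a => if a ≤ p ∧ p < a + u.length then ((u.getD (p - a) 1 : ℕ+) : ℕ) else 1) := by
  have h1 : 1 ≤ E.sup (fun a => if a ≤ p ∧ p < a + u.length then ((u.getD (p - a) 1 : ℕ+) : ℕ) else 1) := by
    refine le_trans ?_ (Finset.le_sup hE)
    split
    · exact (u.getD _ 1).one_le
    · exact le_refl 1
  simpa [clusterAt] using PNat.toPNat'_coe (lt_of_lt_of_le Nat.zero_lt_one h1)

lemma clusterAt_comp (u : Word) (E₁ E₂ : Finset ℕ)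
    (h11 : 1 ∈ E₁) (h1a : ∀ a ∈ E₁, 1 ≤ a) (h21 : 1 ∈ E₂) (h2b : ∀ b ∈ E₂, 1 ≤ b) (p : ℕ) :
    clusterAt (mcluster u E₁) E₂ p =
      clusterAt u ((E₁ ×ˢ E₂).image (fun q => q.1 + q.2 - 1)) p := by
  have hS1 : 1 ≤ E₁.sup id := Finset.le_sup (f := id) h11
  have h3 : 1 ∈ (E₁ ×ˢ E₂).image (fun q : ℕ × ℕ => q.1 + q.2 - 1) :=
    Finset.mem_image.2 ⟨(1, 1), Finset.mem_product.2 ⟨h11, h21⟩, rfl⟩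
  apply PNat.coe_injective
  rw [clusterAt_coe _ _ _ h21, clusterAt_coe _ _ _ h3, Finset.sup_image,
    Finset.sup_product_right]
  dsimp only [Function.comp]
  refine Finset.sup_congr rfl (fun b hb => ?_)
  have hb1 : 1 ≤ b := h2b b hb
  by_cases hcb : b ≤ p ∧ p < b + (mcluster u E₁).length
  · rw [if_pos hcb]
    have hlt : p - b < E₁.sup id - 1 + u.length := by
      have := hcb.2; rw [mcluster_length] at this; omega
    rw [mcluster_getD u E₁ (p - b) hlt, clusterAt_coe _ _ _ h11]
    refine Finset.sup_congr rfl (fun a ha => ?_)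
    have ha1 : 1 ≤ a := h1a a ha
    by_cases hc : a + b - 1 ≤ p ∧ p < a + b - 1 + u.length
    · rw [if_pos (by omega), if_pos hc]
      congr 2
      omega
    · rw [if_neg (by omega), if_neg hc]
  · rw [if_neg hcb]
    rw [mcluster_length] at hcb
    refine (le_antisymm (Finset.sup_le fun a ha => ?_) ?_).symm
    · have haS : a ≤ E₁.sup id := Finset.le_sup (f := id) ha
      have ha1 : 1 ≤ a := h1a a ha
      rw [if_neg]
      omega
    · refine le_trans ?_ (Finset.le_sup h11)
      rw [if_neg (by omega)]

theorem mcluster_mcluster' (u : Word) (E₁ E₂ : Finset ℕ)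
    (h11 : 1 ∈ E₁) (h1a : ∀ a ∈ E₁, 1 ≤ a) (h21 : 1 ∈ E₂) (h2b : ∀ b ∈ E₂, 1 ≤ b) :
    mcluster (mcluster u E₁) E₂ =
      mcluster u ((E₁ ×ˢ E₂).image (fun p => p.1 + p.2 - 1)) := by
  have hS1 : 1 ≤ E₁.sup id := Finset.le_sup (f := id) h11
  have hS2 : 1 ≤ E₂.sup id := Finset.le_sup (f := id) h21
  have hS3 : ((E₁ ×ˢ E₂).image (fun p : ℕ × ℕ => p.1 + p.2 - 1)).sup id
      = E₁.sup id + E₂.sup id - 1 := by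
    apply le_antisymm
    · refine Finset.sup_le fun x hx => ?_
      obtain ⟨⟨a, b⟩, hab, rfl⟩ := Finset.mem_image.1 hx
      obtain ⟨ha, hb⟩ := Finset.mem_product.1 hab
      have h1 := Finset.le_sup (f := id) ha
      have h2 := Finset.le_sup (f := id) hb
      simp only [id] at *
      omega
    · obtain ⟨a, ha, hae⟩ := Finset.exists_mem_eq_sup E₁ ⟨1, h11⟩ id
      obtain ⟨b, hb, hbe⟩ := Finset.exists_mem_eq_sup E₂ ⟨1, h21⟩ id
      refine Finset.le_sup (f := id) (Finset.mem_image.2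
        ⟨(a, b), Finset.mem_product.2 ⟨ha, hb⟩, ?_⟩)
      simp only [id] at hae hbe
      omega
  have hfun : (fun j => clusterAt (mcluster u E₁) E₂ (j + 1))
      = fun j => clusterAt u ((E₁ ×ˢ E₂).image (fun p : ℕ × ℕ => p.1 + p.2 - 1)) (j + 1) :=
    funext fun j => clusterAt_comp u E₁ E₂ h11 h1a h21 h2b (j + 1)
  rw [show mcluster (mcluster u E₁) E₂ = (List.range (E₂.sup id - 1 +
      (mcluster u E₁).length)).map (fun j => clusterAt (mcluster u E₁) E₂ (j + 1)) from rfl,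
    hfun, mcluster_length, mcluster, hS3]
  congr 2
  omega

/-- a minimal cluster of a minimal cluster of `u` is a minimal
cluster of `u`, on the embedding set `{i + j - 1 : i ∈ E₁, j ∈ E₂}`. -/
theorem mcluster_mcluster (u : Word) (E₁ E₂ : Finset ℕ)
    (h1 : IsEmbSet u.length E₁) (h2 : IsEmbSet (mcluster u E₁).length E₂) :
    mcluster (mcluster u E₁) E₂ =
      mcluster u ((E₁ ×ˢ E₂).image (fun p => p.1 + p.2 - 1)) := by
  obtain ⟨h11, h1a, -⟩ := h1
  obtain ⟨h21, h2b, -⟩ := h2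
  exact mcluster_mcluster' u E₁ E₂ h11 h1a h21 h2b
end

section
/- The permutations 213 and 312 are super-strongly Wilf equivalent. -/
namespace SSW


def hc : List ℕ+ → List ℕ+
  | [] => []
  | a :: t =>
    if a = 1 then 1 :: hc t
    else (a :: t.takeWhile (· ≠ 1)).rotate (t.takeWhile (· ≠ 1)).length
         ++ hc (t.dropWhile (· ≠ 1))
termination_by l => l.length
decreasing_by
  all_goals simp only [List.length_cons]
  · omega
  · exact Nat.lt_succ_of_le ((List.dropWhile_sublist _).length_le)

def gc : List ℕ+ → List ℕ+
  | [] => []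
  | [a] => [a]
  | a :: b :: l =>
    if a = 1 then 1 :: gc (b :: l)
    else if b = 1 then a :: 1 :: gc l
    else b :: gc (a :: l)
termination_by l => l.length

@[simp] lemma gc_nil : gc [] = [] := by simp [gc]
@[simp] lemma gc_single (a : ℕ+) : gc [a] = [a] := by simp [gc]
lemma gc_one (t : List ℕ+) : gc (1 :: t) = 1 :: gc t := by
  cases t <;> simp [gc]
lemma gc_c1 (a : ℕ+) (t : List ℕ+) (ha : a ≠ 1) : gc (a :: 1 :: t) = a :: 1 :: gc t := by
  simp [gc, ha]
lemma gc_cc (a b : ℕ+) (t : List ℕ+) (ha : a ≠ 1) (hb : b ≠ 1) :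
    gc (a :: b :: t) = b :: gc (a :: t) := by
  simp [gc, ha, hb]

lemma rot1 (a : ℕ+) (l : List ℕ+) : (a :: l).rotate 1 = l ++ [a] := by
  simpa using List.rotate_cons_succ l a 0

@[simp] lemma hc_nil : hc [] = [] := by simp [hc]
lemma hc_one (t : List ℕ+) : hc (1 :: t) = 1 :: hc t := by simp [hc]

lemma tw_dw (p : List ℕ+) (hp : ∀ x ∈ p, x ≠ 1) (t : List ℕ+) :
    (p ++ 1 :: t).takeWhile (· ≠ 1) = p ∧ (p ++ 1 :: t).dropWhile (· ≠ 1) = 1 :: t := by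
  induction p with
  | nil => simp [List.takeWhile_cons, List.dropWhile_cons]
  | cons a p ih =>
    have ha : a ≠ 1 := hp a (by simp)
    have h2 := ih (fun x hx => hp x (by simp [hx]))
    simp only [decide_not] at h2
    simp [List.takeWhile_cons, List.dropWhile_cons, ha, h2.1, h2.2]

lemma tw_dw_self (p : List ℕ+) (hp : ∀ x ∈ p, x ≠ 1) :
    p.takeWhile (· ≠ 1) = p ∧ p.dropWhile (· ≠ 1) = [] := by
  induction p with
  | nil => simp
  | cons a p ih =>
    have ha : a ≠ 1 := hp a (by simp)
    have h2 := ih (fun x hx => hp x (by simp [hx]))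
    simp only [decide_not] at h2
    simp [List.takeWhile_cons, List.dropWhile_cons, ha, h2.1, h2.2]

lemma hc_run_cons (p : List ℕ+) (hp : ∀ x ∈ p, x ≠ 1) (t : List ℕ+) :
    hc (p ++ 1 :: t) = p.rotate p.length.pred ++ 1 :: hc t := by
  cases p with
  | nil => simp [hc_one]
  | cons a p' =>
    have ha : a ≠ 1 := hp a (by simp)
    have hp' : ∀ x ∈ p', x ≠ 1 := fun x hx => hp x (by simp [hx])
    have h := tw_dw p' hp' t
    rw [List.cons_append, hc]
    simp only [if_neg ha, h.1, h.2, hc_one, List.length_cons, Nat.pred_succ]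

lemma hc_run_nil (p : List ℕ+) (hp : ∀ x ∈ p, x ≠ 1) :
    hc p = p.rotate p.length.pred := by
  cases p with
  | nil => simp
  | cons a p' =>
    have ha : a ≠ 1 := hp a (by simp)
    have hp' : ∀ x ∈ p', x ≠ 1 := fun x hx => hp x (by simp [hx])
    have h := tw_dw_self p' hp'
    rw [hc]
    simp only [if_neg ha, h.1, h.2, hc_nil, List.append_nil, List.length_cons, Nat.pred_succ]

lemma gc_run_nil (p : List ℕ+) (hp : ∀ x ∈ p, x ≠ 1) : gc p = p.rotate 1 := by
  induction p using gc.induct with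
  | case1 => simp
  | case2 a => simp [rot1]
  | case3 b t ih => exact absurd rfl (hp 1 (by simp))
  | case4 a t ha ih => exact absurd rfl (hp 1 (by simp))
  | case5 a b t ha hb ih =>
    have h2 := ih (fun x hx => hp x (by simp only [List.mem_cons] at hx ⊢; tauto))
    rw [gc_cc _ _ _ ha hb, h2, rot1, rot1]
    simp

lemma gc_run_cons (p : List ℕ+) (hp : ∀ x ∈ p, x ≠ 1) (t : List ℕ+) :
    gc (p ++ 1 :: t) = p.rotate 1 ++ 1 :: gc t := by
  induction p using gc.induct with
  | case1 => simp [gc_one]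
  | case2 a =>
    have ha : a ≠ 1 := hp a (by simp)
    simp [gc_c1 _ _ ha, rot1]
  | case3 b t' ih => exact absurd rfl (hp 1 (by simp))
  | case4 a t' ha ih => exact absurd rfl (hp 1 (by simp))
  | case5 a b t' ha hb ih =>
    have h2 := ih (fun x hx => hp x (by simp only [List.mem_cons] at hx ⊢; tauto))
    rw [List.cons_append, List.cons_append, gc_cc _ _ _ ha hb, ← List.cons_append, h2,
      rot1, rot1]
    simp

lemma decomp (a : ℕ+) (t : List ℕ+) (ha : a ≠ 1) :
    ∃ p r, a :: t = p ++ r ∧ p ≠ [] ∧ (∀ x ∈ p, x ≠ 1) ∧ (r = [] ∨ ∃ t', r = 1 :: t') := by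
  refine ⟨(a :: t).takeWhile (· ≠ 1), (a :: t).dropWhile (· ≠ 1),
    List.takeWhile_append_dropWhile.symm, ?_, ?_, ?_⟩
  · simp [List.takeWhile_cons, ha]
  · intro x hx
    have := List.mem_takeWhile_imp hx
    simpa using this
  · rcases hr : (a :: t).dropWhile (· ≠ 1) with _ | ⟨c, r'⟩
    · exact Or.inl hr
    · refine Or.inr ⟨r', ?_⟩
      have h0 : 0 < ((a :: t).dropWhile (· ≠ 1)).length := by rw [hr]; simp
      have h1 := List.dropWhile_get_zero_not (p := (· ≠ 1)) (a :: t) h0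
      rw [List.get_of_eq hr] at h1
      simp at h1
      rw [hr, h1]

lemma onefree_rotate {p : List ℕ+} (hp : ∀ x ∈ p, x ≠ 1) (n : ℕ) :
    ∀ x ∈ p.rotate n, x ≠ 1 := fun x hx => hp x ((List.mem_rotate).1 hx)

lemma hc_gc_aux : ∀ n (l : List ℕ+), l.length ≤ n → hc (gc l) = l := by
  intro n
  induction n with
  | zero =>
    intro l hl
    rw [List.length_eq_zero_iff.1 (Nat.le_zero.1 hl)]
    simp
  | succ n ih =>
    intro l hl
    match l with
    | [] => simp
    | a :: t =>
      by_cases ha : a = 1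
      · subst ha
        rw [gc_one, hc_one, ih t (by simpa using Nat.succ_le_succ_iff.1 hl)]
      · obtain ⟨p, r, hlpr, hpne, hp, hr⟩ := decomp a t ha
        have hplen : 1 ≤ p.length := List.length_pos_iff.2 hpne
        rcases hr with rfl | ⟨t', rfl⟩
        · rw [List.append_nil] at hlpr
          rw [hlpr, gc_run_nil p hp, hc_run_nil _ (onefree_rotate hp 1),
            List.length_rotate, List.rotate_rotate]
          rw [show 1 + p.length.pred = p.length by rw [Nat.pred_eq_sub_one]; omega, List.rotate_length]
        · have hlen : t'.length ≤ n := by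
            have := congrArg List.length hlpr
            simp at this
            simp at hl
            omega
          rw [hlpr, gc_run_cons p hp t', hc_run_cons _ (onefree_rotate hp 1) _,
            List.length_rotate, List.rotate_rotate, ih t' hlen]
          rw [show 1 + p.length.pred = p.length by rw [Nat.pred_eq_sub_one]; omega, List.rotate_length]

lemma gc_hc_aux : ∀ n (l : List ℕ+), l.length ≤ n → gc (hc l) = l := by
  intro n
  induction n with
  | zero =>
    intro l hl
    rw [List.length_eq_zero_iff.1 (Nat.le_zero.1 hl)]
    simp
  | succ n ih =>
    intro l hl
    match l with
    | [] => simp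
    | a :: t =>
      by_cases ha : a = 1
      · subst ha
        rw [hc_one, gc_one, ih t (by simpa using Nat.succ_le_succ_iff.1 hl)]
      · obtain ⟨p, r, hlpr, hpne, hp, hr⟩ := decomp a t ha
        have hplen : 1 ≤ p.length := List.length_pos_iff.2 hpne
        rcases hr with rfl | ⟨t', rfl⟩
        · rw [List.append_nil] at hlpr
          rw [hlpr, hc_run_nil p hp, gc_run_nil _ (onefree_rotate hp _),
            List.rotate_rotate]
          rw [show p.length.pred + 1 = p.length by rw [Nat.pred_eq_sub_one]; omega, List.rotate_length]
        · have hlen : t'.length ≤ n := by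
            have := congrArg List.length hlpr
            simp at this
            simp at hl
            omega
          rw [hlpr, hc_run_cons p hp t', gc_run_cons _ (onefree_rotate hp _) _,
            List.rotate_rotate, ih t' hlen]
          rw [show p.length.pred + 1 = p.length by rw [Nat.pred_eq_sub_one]; omega, List.rotate_length]

lemma hc_gc (l : List ℕ+) : hc (gc l) = l := hc_gc_aux l.length l le_rfl
lemma gc_hc (l : List ℕ+) : gc (hc l) = l := gc_hc_aux l.length l le_rfl

@[simp] lemma length_gc (l : List ℕ+) : (gc l).length = l.length := by
  induction l using gc.induct with
  | case1 => simp
  | case2 => simp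
  | case3 b t ih => simp [gc_one, ih]
  | case4 a t ha ih => simp [gc_c1 _ _ ha, ih]
  | case5 a b t ha hb ih => simp [gc_cc _ _ _ ha hb, ih]

lemma ht_cons (a : ℕ+) (l : List ℕ+) : ht (a :: l) = a + ht l := by simp [ht]

@[simp] lemma ht_gc (l : List ℕ+) : ht (gc l) = ht l := by
  induction l using gc.induct with
  | case1 => simp
  | case2 => simp
  | case3 b t ih => rw [gc_one, ht_cons, ht_cons, ih]
  | case4 a t ha ih => rw [gc_c1 _ _ ha, ht_cons, ht_cons, ht_cons, ht_cons, ih]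
  | case5 a b t ha hb ih =>
    rw [gc_cc _ _ _ ha hb, ht_cons, ht_cons, ih, ht_cons, ht_cons]
    omega

@[simp] lemma length_hc (l : List ℕ+) : (hc l).length = l.length := by
  conv_rhs => rw [← gc_hc l]
  rw [length_gc]


lemma two_le_iff (x : ℕ+) : 2 ≤ x ↔ x ≠ 1 := by
  have h1 : 0 < (x:ℕ) := x.property
  rw [← PNat.coe_le_coe, show ((2:ℕ+):ℕ) = 2 from rfl, Ne, ← PNat.coe_eq_one_iff]
  omega

lemma two_le_of_ne {x : ℕ+} (h : x ≠ 1) : 2 ≤ x := (two_le_iff x).2 h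

lemma lemA (l : List ℕ+) : ∀ i, (gc l).getD i 1 = 1 ↔ l.getD i 1 = 1 := by
  induction l using gc.induct with
  | case1 => simp
  | case2 a => simp
  | case3 b t ih =>
    intro i
    rw [gc_one]
    cases i with
    | zero => simp
    | succ j => rw [List.getD_cons_succ, List.getD_cons_succ]; exact ih j
  | case4 a t ha ih =>
    intro i
    rw [gc_c1 _ _ ha]
    match i with
    | 0 => simp
    | 1 => simp
    | (j+2) =>
      rw [List.getD_cons_succ, List.getD_cons_succ, List.getD_cons_succ, List.getD_cons_succ]
      exact ih j
  | case5 a b t ha hb ih =>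
    intro i
    rw [gc_cc _ _ _ ha hb]
    match i with
    | 0 => simp [ha, hb]
    | (j+1) =>
      rw [List.getD_cons_succ, List.getD_cons_succ]
      have h2 := ih j
      cases j with
      | zero => simp only [List.getD_cons_zero] at h2 ⊢; simp [ha] at h2; simp [hb, h2]
      | succ k => rw [List.getD_cons_succ] at h2 ⊢; exact h2

lemma key (l : List ℕ+) : ∀ i, (2 ≤ l.getD i 1 ∧ 3 ≤ l.getD (i+1) 1) ↔
    (3 ≤ (gc l).getD i 1 ∧ 2 ≤ (gc l).getD (i+1) 1) := by
  induction l using gc.induct with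
  | case1 => intro i; simp
  | case2 a =>
    intro i
    match i with
    | 0 =>
      simp only [gc_single, List.getD_cons_zero, List.getD_cons_succ, List.getD_nil]
      constructor
      · rintro ⟨-, h⟩; exact absurd h (by decide)
      · rintro ⟨-, h⟩; exact absurd h (by decide)
    | (j+1) =>
      simp only [gc_single, List.getD_cons_succ]
      constructor
      · rintro ⟨h, -⟩; rw [List.getD_nil] at h; exact absurd h (by decide)
      · rintro ⟨h, -⟩; rw [List.getD_nil] at h; exact absurd h (by decide)
  | case3 b t ih =>
    intro i
    rw [gc_one]
    match i with
    | 0 =>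
      simp only [List.getD_cons_zero]
      constructor
      · rintro ⟨h, -⟩; exact absurd h (by decide)
      · rintro ⟨h, -⟩; exact absurd h (by decide)
    | (j+1) =>
      rw [List.getD_cons_succ, List.getD_cons_succ]
      exact ih j
  | case4 a t ha ih =>
    intro i
    rw [gc_c1 _ _ ha]
    match i with
    | 0 =>
      simp only [List.getD_cons_zero, List.getD_cons_succ]
      constructor
      · rintro ⟨-, h⟩; exact absurd h (by decide)
      · rintro ⟨-, h⟩; exact absurd h (by decide)
    | 1 =>
      simp only [List.getD_cons_succ, List.getD_cons_zero]
      constructor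
      · rintro ⟨h, -⟩; exact absurd h (by decide)
      · rintro ⟨h, -⟩; exact absurd h (by decide)
    | (j+2) =>
      rw [List.getD_cons_succ, List.getD_cons_succ, List.getD_cons_succ, List.getD_cons_succ]
      exact ih j
  | case5 a b t ha hb ih =>
    intro i
    rw [gc_cc _ _ _ ha hb]
    match i with
    | 0 =>
      simp only [List.getD_cons_zero, List.getD_cons_succ]
      have hm : 2 ≤ (gc (a :: t)).getD 0 1 := by
        refine two_le_of_ne fun h => ?_
        rw [lemA (a :: t) 0] at h
        simp at h
        exact ha h
      constructor
      · rintro ⟨-, h⟩; exact ⟨h, hm⟩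
      · rintro ⟨h, -⟩; exact ⟨two_le_of_ne ha, h⟩
    | (j+1) =>
      rw [List.getD_cons_succ, List.getD_cons_succ]
      have h2 := ih j
      cases j with
      | zero =>
        rw [List.getD_cons_zero] at h2 ⊢
        rw [List.getD_cons_succ] at h2 ⊢
        constructor
        · rintro ⟨-, h⟩; exact (h2.1 ⟨two_le_of_ne ha, h⟩)
        · intro h; exact ⟨two_le_of_ne hb, (h2.2 h).2⟩
      | succ k =>
        rw [List.getD_cons_succ] at h2 ⊢
        rw [List.getD_cons_succ] at h2 ⊢
        exact h2


def inter : List ℕ+ → List ℕ+ → List ℕ+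
  | [], y => y
  | a :: x, y => a :: inter y x
termination_by x y => x.length + y.length

def deinter : List ℕ+ → List ℕ+ × List ℕ+
  | [] => ([], [])
  | a :: l => (a :: (deinter l).2, (deinter l).1)

@[simp] lemma inter_nil (y : List ℕ+) : inter [] y = y := by simp [inter]
lemma inter_cons (a : ℕ+) (x y : List ℕ+) : inter (a :: x) y = a :: inter y x := by
  rw [inter]

lemma inter_deinter (l : List ℕ+) : inter (deinter l).1 (deinter l).2 = l := by
  induction l with
  | nil => simp [deinter]
  | cons a l ih => rw [deinter, inter_cons, ih]

lemma deinter_len (l : List ℕ+) :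
    (deinter l).2.length ≤ (deinter l).1.length ∧
      (deinter l).1.length ≤ (deinter l).2.length + 1 := by
  induction l with
  | nil => simp [deinter]
  | cons a l ih => rw [deinter]; simp; omega

lemma deinter_inter_aux : ∀ n (x y : List ℕ+), x.length + y.length ≤ n →
    y.length ≤ x.length → x.length ≤ y.length + 1 → deinter (inter x y) = (x, y) := by
  intro n
  induction n with
  | zero =>
    intro x y h1 h2 h3
    rw [List.length_eq_zero_iff.1 (by omega : x.length = 0),
      List.length_eq_zero_iff.1 (by omega : y.length = 0)]
    simp [deinter]
  | succ n ih =>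
    intro x y h1 h2 h3
    match x with
    | [] =>
      have hy : y.length = 0 := by simp only [List.length_nil] at h2; omega
      rw [List.length_eq_zero_iff.1 hy]
      simp [deinter]
    | a :: x' =>
      rw [inter_cons, deinter]
      have hlen : y.length + x'.length ≤ n := by simp at h1; omega
      have h2' : x'.length ≤ y.length := by simp at h3; omega
      have h3' : y.length ≤ x'.length + 1 := by simp at h2; omega
      rw [ih y x' hlen h2' h3']

lemma length_inter_aux : ∀ n (x y : List ℕ+), x.length + y.length ≤ n →
    (inter x y).length = x.length + y.length := by
  intro n
  induction n with
  | zero =>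
    intro x y h1
    rw [List.length_eq_zero_iff.1 (by omega : x.length = 0),
      List.length_eq_zero_iff.1 (by omega : y.length = 0)]
    simp
  | succ n ih =>
    intro x y h1
    match x with
    | [] => simp
    | a :: x' =>
      rw [inter_cons]
      simp only [List.length_cons]
      rw [ih y x' (by simp at h1; omega)]
      omega

lemma length_inter (x y : List ℕ+) : (inter x y).length = x.length + y.length :=
  length_inter_aux (x.length + y.length) x y le_rfl

lemma ht_inter_aux : ∀ n (x y : List ℕ+), x.length + y.length ≤ n →
    ht (inter x y) = ht x + ht y := by
  intro n
  induction n with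
  | zero =>
    intro x y h1
    rw [List.length_eq_zero_iff.1 (by omega : x.length = 0),
      List.length_eq_zero_iff.1 (by omega : y.length = 0)]
    simp [ht]
  | succ n ih =>
    intro x y h1
    match x with
    | [] => simp [ht]
    | a :: x' =>
      rw [inter_cons, ht_cons, ht_cons, ih y x' (by simp at h1; omega)]
      omega

lemma ht_inter (x y : List ℕ+) : ht (inter x y) = ht x + ht y :=
  ht_inter_aux (x.length + y.length) x y le_rfl

lemma inter_getD_aux : ∀ n (x y : List ℕ+), x.length + y.length ≤ n →
    y.length ≤ x.length → x.length ≤ y.length + 1 →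
    (∀ i, (inter x y).getD (2*i) 1 = x.getD i 1) ∧
      (∀ i, (inter x y).getD (2*i+1) 1 = y.getD i 1) := by
  intro n
  induction n with
  | zero =>
    intro x y h1 h2 h3
    rw [List.length_eq_zero_iff.1 (by omega : x.length = 0),
      List.length_eq_zero_iff.1 (by omega : y.length = 0)]
    simp
  | succ n ih =>
    intro x y h1 h2 h3
    match x with
    | [] =>
      have hy : y.length = 0 := by simp only [List.length_nil] at h2; omega
      rw [List.length_eq_zero_iff.1 hy]
      simp
    | a :: x' =>
      have hlen : y.length + x'.length ≤ n := by simp at h1; omega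
      have h2' : x'.length ≤ y.length := by simp at h3; omega
      have h3' : y.length ≤ x'.length + 1 := by simp at h2; omega
      have ihv := ih y x' hlen h2' h3'
      constructor
      · intro i
        match i with
        | 0 => rw [inter_cons]; simp
        | (j+1) =>
          rw [inter_cons, show 2*(j+1) = (2*j+1)+1 by ring, List.getD_cons_succ,
            List.getD_cons_succ, ihv.2 j]
      · intro i
        rw [inter_cons, List.getD_cons_succ, ihv.1 i]

def fmap (w : Word) : Word := inter (gc (deinter w).1) (gc (deinter w).2)
def finv (w : Word) : Word := inter (hc (deinter w).1) (hc (deinter w).2)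

lemma fmap_length (w : Word) : (fmap w).length = w.length := by
  conv_rhs => rw [← inter_deinter w]
  rw [fmap, length_inter, length_inter, length_gc, length_gc]

lemma fmap_ht (w : Word) : ht (fmap w) = ht w := by
  conv_rhs => rw [← inter_deinter w]
  rw [fmap, ht_inter, ht_inter, ht_gc, ht_gc]

lemma fmap_finv_id (w : Word) : fmap (finv w) = w := by
  have hd := deinter_len w
  have h1 : deinter (finv w) = (hc (deinter w).1, hc (deinter w).2) := by
    rw [finv]
    exact deinter_inter_aux _ _ _ le_rfl (by simp [hd.1]) (by simpa using hd.2)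
  rw [fmap, h1]
  simp only [gc_hc]
  exact inter_deinter w

lemma finv_fmap_id (w : Word) : finv (fmap w) = w := by
  have hd := deinter_len w
  have h1 : deinter (fmap w) = (gc (deinter w).1, gc (deinter w).2) := by
    rw [fmap]
    exact deinter_inter_aux _ _ _ le_rfl (by simp [hd.1]) (by simpa using hd.2)
  rw [finv, h1]
  simp only [hc_gc]
  exact inter_deinter w

lemma main_pt (w : Word) (a : ℕ) :
    (2 ≤ w.getD a 1 ∧ 3 ≤ w.getD (a+2) 1) ↔
      (3 ≤ (fmap w).getD a 1 ∧ 2 ≤ (fmap w).getD (a+2) 1) := by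
  have hd := deinter_len w
  have hw := inter_deinter w
  have hgd := inter_getD_aux _ (deinter w).1 (deinter w).2 le_rfl hd.1 hd.2
  have hgd' := inter_getD_aux ((gc (deinter w).1).length + (gc (deinter w).2).length)
      (gc (deinter w).1) (gc (deinter w).2) le_rfl (by simp [hd.1]) (by simpa using hd.2)
  rcases Nat.even_or_odd a with ⟨i, hi⟩ | ⟨i, hi⟩
  · have ha : a = 2*i := by omega
    rw [ha, show 2*i+2 = 2*(i+1) by ring, ← hw, hgd.1 i, hgd.1 (i+1), hw]
    rw [show (fmap w) = inter (gc (deinter w).1) (gc (deinter w).2) from rfl,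
      hgd'.1 i, hgd'.1 (i+1)]
    exact key (deinter w).1 i
  · have ha : a = 2*i+1 := by omega
    rw [ha, show 2*i+1+2 = 2*(i+1)+1 by ring, ← hw, hgd.2 i, hgd.2 (i+1), hw]
    rw [show (fmap w) = inter (gc (deinter w).1) (gc (deinter w).2) from rfl,
      hgd'.2 i, hgd'.2 (i+1)]
    exact key (deinter w).2 i

end SSW

/-- `213 ∼ₛₛ 312`. -/
theorem sswilf_213_312 : SSWilf [2, 1, 3] [3, 1, 2] := by
  refine ⟨SSW.fmap, ?_, fun w => ⟨SSW.fmap_length w, SSW.fmap_ht w⟩, fun w => ?_⟩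
  · exact Function.bijective_iff_has_inverse.2
      ⟨SSW.finv, SSW.finv_fmap_id, SSW.fmap_finv_id⟩
  · ext j
    simp only [Em, Set.mem_setOf_eq, List.length_cons, List.length_nil, SSW.fmap_length]
    constructor
    · rintro ⟨h1, h2, h3⟩
      refine ⟨h1, h2, ?_⟩
      have hm := (SSW.main_pt w (j-1)).1 ⟨by simpa using h3 0 (by norm_num),
        by simpa using h3 2 (by norm_num)⟩
      intro k hk
      interval_cases k
      · simpa using hm.1
      · simpa using PNat.one_le _
      · simpa using hm.2
    · rintro ⟨h1, h2, h3⟩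
      refine ⟨h1, h2, ?_⟩
      have hm := (SSW.main_pt w (j-1)).2 ⟨by simpa using h3 0 (by norm_num),
        by simpa using h3 2 (by norm_num)⟩
      intro k hk
      interval_cases k
      · simpa using hm.1
      · simpa using PNat.one_le _
      · simpa using hm.2
end
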